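/- (Comparison claim.) Let c > 0 and let K, L ≥ 0 be real constants. Let φ : ℝ → ℝ be differentiable on (0,c] with φ(x) > 0 there, and let q : ℝ → ℝ satisfy, for all x ∈ (0,c], L ≥ |1 + x·(deriv φ)(x)/φ(x)| and K ≥ |q(x)/φ(x)|. Let u : ℝ → ℝ be twice continuously differentiable on (0,c] satisfying x·u″(x) + (1 + x·(deriv φ)(x)/φ(x))·u′(x) = (q(x)/φ(x))·u(x) for all x ∈ (0,c] (equivalently −x·φ(x)·u″(x) − (φ(x)+x·φ′(x))·u′(x) + q(x)·u(x) = 0), and let u₀ : ℝ → ℝ be twice continuously differentiable on (0,c] satisfying x·u₀″(x) = −L·u₀′(x) + K·u₀(x) for all x ∈ (0,c], with u₀(c) = |u(c)| + 1 and u₀′(c) = −|u′(c)| − 1. Then for all x ∈ (0,c): |u(x)| < u₀(x) and u₀′(x) < −|u′(x)|. -/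

import Mathlib

open Topology Filter


/-- Comparison claim: a solution `u` of
`x·u'' + (1 + x·φ'(x)/φ(x))·u' = (q(x)/φ(x))·u` on `(0,c]` is dominated by the solution
`u₀` of the model equation `x·u₀'' = −L·u₀' + K·u₀` with `u₀(c) = |u(c)| + 1`,
`u₀'(c) = −|u'(c)| − 1`, where `L ≥ |1 + x·φ'(x)/φ(x)|` and `K ≥ |q(x)/φ(x)|`:
for all `x ∈ (0,c)`, `|u(x)| < u₀(x)` and `u₀'(x) < −|u'(x)|`. -/
theorem comparison_with_model_equation
    (c : ℝ) (hc : 0 < c)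
    (K L : ℝ) (hK : 0 ≤ K) (hL : 0 ≤ L)
    (φ : ℝ → ℝ)
    (hφ : ∀ x ∈ Set.Ioc 0 c, DifferentiableAt ℝ φ x)
    (hφpos : ∀ x ∈ Set.Ioc 0 c, 0 < φ x)
    (q : ℝ → ℝ)
    (hLbd : ∀ x ∈ Set.Ioc 0 c, |1 + x * deriv φ x / φ x| ≤ L)
    (hKbd : ∀ x ∈ Set.Ioc 0 c, |q x / φ x| ≤ K)
    (u : ℝ → ℝ)
    (hu : ∀ x ∈ Set.Ioc 0 c, DifferentiableAt ℝ u x)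
    (hu' : ∀ x ∈ Set.Ioc 0 c, DifferentiableAt ℝ (deriv u) x)
    (hu'' : ContinuousOn (deriv (deriv u)) (Set.Ioc 0 c))
    (hueq : ∀ x ∈ Set.Ioc 0 c,
      x * deriv (deriv u) x + (1 + x * deriv φ x / φ x) * deriv u x
        = (q x / φ x) * u x)
    (u₀ : ℝ → ℝ)
    (hu₀ : ∀ x ∈ Set.Ioc 0 c, DifferentiableAt ℝ u₀ x)
    (hu₀' : ∀ x ∈ Set.Ioc 0 c, DifferentiableAt ℝ (deriv u₀) x)
    (hu₀'' : ContinuousOn (deriv (deriv u₀)) (Set.Ioc 0 c))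
    (hu₀eq : ∀ x ∈ Set.Ioc 0 c,
      x * deriv (deriv u₀) x = -L * deriv u₀ x + K * u₀ x)
    (hu₀c : u₀ c = |u c| + 1)
    (hu₀'c : deriv u₀ c = -|deriv u c| - 1) :
    ∀ x ∈ Set.Ioo 0 c, |u x| < u₀ x ∧ deriv u₀ x < -|deriv u x| := by
  classical  
  -- the key comparison lemma with margin 1
  have key : ∀ x ∈ Set.Ioc 0 c,
      (∀ y ∈ Set.Icc x c, |u y| ≤ u₀ y ∧ deriv u₀ y ≤ -|deriv u y|) →
      ∀ y ∈ Set.Icc x c, 1 ≤ u₀ y - |u y| ∧ deriv u₀ y + |deriv u y| ≤ -1 := by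
    intro x hx hW
    have hsub : Set.Icc x c ⊆ Set.Ioc 0 c :=
      fun y hy => ⟨lt_of_lt_of_le hx.1 hy.1, hy.2⟩
    have hsub' : Set.Ioo x c ⊆ Set.Ioc 0 c :=
      fun y hy => ⟨hx.1.trans hy.1, hy.2.le⟩
    have main : ∀ ε : ℝ, |ε| = 1 → ∀ y ∈ Set.Icc x c,
        deriv u₀ y + ε * deriv u y ≤ -1 := by
      intro ε hε y hy
      have hmono : MonotoneOn (fun z => deriv u₀ z + ε * deriv u z) (Set.Icc x c) := by
        apply monotoneOn_of_deriv_nonneg (convex_Icc x c)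
        · exact fun z hz =>
            ((hu₀' z (hsub hz)).continuousAt.add
              (continuousAt_const.mul (hu' z (hsub hz)).continuousAt)).continuousWithinAt
        · rw [interior_Icc]
          exact fun z hz =>
            ((hu₀' z (hsub' hz)).add ((hu' z (hsub' hz)).const_mul ε)).differentiableWithinAt
        · rw [interior_Icc]
          intro z hz
          have hzI : z ∈ Set.Ioc 0 c := hsub' hz
          have hz0 : (0:ℝ) < z := hzI.1
          have hd : deriv (fun z => deriv u₀ z + ε * deriv u z) z
              = deriv (deriv u₀) z + ε * deriv (deriv u) z := by
            rw [deriv_fun_add (hu₀' z hzI) ((hu' z hzI).const_mul ε),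
              deriv_const_mul ε (hu' z hzI)]
          rw [hd]
          have hWz := hW z ⟨hz.1.le, hz.2.le⟩
          have habs' : |deriv u z| ≤ -(deriv u₀ z) := by
            have := hWz.2; linarith
          have h1 : z * deriv (deriv u) z
              = (q z / φ z) * u z - (1 + z * deriv φ z / φ z) * deriv u z := by
            have := hueq z hzI; linarith
          have hb : |z * deriv (deriv u) z| ≤ K * u₀ z + L * -(deriv u₀ z) := by
            rw [h1]
            have t1 : |q z / φ z * u z| ≤ K * u₀ z := by
              rw [abs_mul]
              exact mul_le_mul (hKbd z hzI) hWz.1 (abs_nonneg _) hK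
            have t2 : |(1 + z * deriv φ z / φ z) * deriv u z| ≤ L * -(deriv u₀ z) := by
              rw [abs_mul]
              exact mul_le_mul (hLbd z hzI) habs' (abs_nonneg _) hL
            calc |q z / φ z * u z - (1 + z * deriv φ z / φ z) * deriv u z|
                ≤ |q z / φ z * u z| + |(1 + z * deriv φ z / φ z) * deriv u z| := abs_sub _ _
              _ ≤ K * u₀ z + L * -(deriv u₀ z) := add_le_add t1 t2
          have hεb : -(K * u₀ z + L * -(deriv u₀ z)) ≤ ε * (z * deriv (deriv u) z) := by
            have h2 : -|z * deriv (deriv u) z| ≤ ε * (z * deriv (deriv u) z) := by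
              have h3 := neg_abs_le (ε * (z * deriv (deriv u) z))
              rwa [abs_mul, hε, one_mul] at h3
            linarith
          have hz2 : 0 ≤ z * (deriv (deriv u₀) z + ε * deriv (deriv u) z) := by
            have hexp : z * (deriv (deriv u₀) z + ε * deriv (deriv u) z)
                = z * deriv (deriv u₀) z + ε * (z * deriv (deriv u) z) := by ring
            rw [hexp, hu₀eq z hzI]
            linarith
          exact le_of_mul_le_mul_left (by linarith) hz0
      have hfc : deriv u₀ y + ε * deriv u y ≤ deriv u₀ c + ε * deriv u c :=
        hmono hy ⟨hx.2, le_rfl⟩ hy.2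
      have hεc : ε * deriv u c ≤ |deriv u c| := by
        have h3 := le_abs_self (ε * deriv u c)
        rwa [abs_mul, hε, one_mul] at h3
      rw [hu₀'c] at hfc
      linarith
    have main2 : ∀ ε : ℝ, |ε| = 1 → ∀ y ∈ Set.Icc x c, 1 ≤ u₀ y + ε * u y := by
      intro ε hε y hy
      have hanti : AntitoneOn (fun z => u₀ z + ε * u z) (Set.Icc x c) := by
        apply antitoneOn_of_deriv_nonpos (convex_Icc x c)
        · exact fun z hz =>
            ((hu₀ z (hsub hz)).continuousAt.add
              (continuousAt_const.mul (hu z (hsub hz)).continuousAt)).continuousWithinAt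
        · rw [interior_Icc]
          exact fun z hz =>
            ((hu₀ z (hsub' hz)).add ((hu z (hsub' hz)).const_mul ε)).differentiableWithinAt
        · rw [interior_Icc]
          intro z hz
          have hzI : z ∈ Set.Ioc 0 c := hsub' hz
          have hd : deriv (fun z => u₀ z + ε * u z) z
              = deriv u₀ z + ε * deriv u z := by
            rw [deriv_fun_add (hu₀ z hzI) ((hu z hzI).const_mul ε),
              deriv_const_mul ε (hu z hzI)]
          rw [hd]
          linarith [main ε hε z ⟨hz.1.le, hz.2.le⟩]
      have hfc : u₀ c + ε * u c ≤ u₀ y + ε * u y :=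
        hanti hy ⟨hx.2, le_rfl⟩ hy.2
      have hεc : -|u c| ≤ ε * u c := by
        have h3 := neg_abs_le (ε * u c)
        rwa [abs_mul, hε, one_mul] at h3
      rw [hu₀c] at hfc
      linarith
    intro y hy
    constructor
    · rcases abs_cases (u y) with ⟨h1, _⟩ | ⟨h1, _⟩
      · have := main2 (-1) (by norm_num) y hy; rw [h1]; linarith
      · have := main2 1 (by norm_num) y hy; rw [h1]; linarith
    · rcases abs_cases (deriv u y) with ⟨h1, _⟩ | ⟨h1, _⟩
      · have := main 1 (by norm_num) y hy; rw [h1]; linarith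
      · have := main (-1) (by norm_num) y hy; rw [h1]; linarith
  -- the set of left endpoints from which the weak inequalities hold up to `c`
  set S : Set ℝ := {x : ℝ | (0 < x ∧ x ≤ c) ∧
    ∀ y ∈ Set.Icc x c, |u y| ≤ u₀ y ∧ deriv u₀ y ≤ -|deriv u y|} with hS
  have hcS : c ∈ S := by
    refine ⟨⟨hc, le_rfl⟩, ?_⟩
    intro y hy
    have hyc : y = c := le_antisymm hy.2 hy.1
    subst hyc
    refine ⟨by rw [hu₀c]; linarith, by rw [hu₀'c]; linarith⟩
  have hSne : S.Nonempty := ⟨c, hcS⟩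
  have hbdd : BddBelow S := ⟨0, fun s hs => hs.1.1.le⟩
  have hm : sInf S ≤ 0 := by
    by_contra hpos
    push_neg at hpos
    set m := sInf S with hm'
    have hmc : m ≤ c := csInf_le hbdd hcS
    have hmI : m ∈ Set.Ioc 0 c := ⟨hpos, hmc⟩
    have hWgt : ∀ y, m < y → y ≤ c → |u y| ≤ u₀ y ∧ deriv u₀ y ≤ -|deriv u y| := by
      intro y hy1 hy2
      obtain ⟨s, hsS, hsy⟩ := exists_lt_of_csInf_lt hSne hy1
      exact hsS.2 y ⟨hsy.le, hy2⟩
    have hWm : |u m| ≤ u₀ m ∧ deriv u₀ m ≤ -|deriv u m| := by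
      rcases eq_or_lt_of_le hmc with h | h
      · rw [h]
        exact ⟨by rw [hu₀c]; linarith [abs_nonneg (u c)],
          by rw [hu₀'c]; linarith⟩
      · have hmem : Set.Ioo m c ∈ 𝓝[>] m := Ioo_mem_nhdsGT h
        constructor
        · have c1 : ContinuousAt (fun y => u₀ y - |u y|) m :=
            (hu₀ m hmI).continuousAt.sub (hu m hmI).continuousAt.abs
          have t1 : Filter.Tendsto (fun y => u₀ y - |u y|) (𝓝[>] m)
              (𝓝 (u₀ m - |u m|)) := c1.tendsto.mono_left nhdsWithin_le_nhds
          have h0 : (0:ℝ) ≤ u₀ m - |u m| :=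
            ge_of_tendsto t1 (Filter.eventually_of_mem hmem
              (fun y hy => by linarith [(hWgt y hy.1 hy.2.le).1]))
          linarith
        · have c2 : ContinuousAt (fun y => -(deriv u₀ y) - |deriv u y|) m :=
            (hu₀' m hmI).continuousAt.neg.sub (hu' m hmI).continuousAt.abs
          have t2 : Filter.Tendsto (fun y => -(deriv u₀ y) - |deriv u y|) (𝓝[>] m)
              (𝓝 (-(deriv u₀ m) - |deriv u m|)) := c2.tendsto.mono_left nhdsWithin_le_nhds
          have h0 : (0:ℝ) ≤ -(deriv u₀ m) - |deriv u m| :=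
            ge_of_tendsto t2 (Filter.eventually_of_mem hmem
              (fun y hy => by linarith [(hWgt y hy.1 hy.2.le).2]))
          linarith
    have hWall : ∀ y ∈ Set.Icc m c, |u y| ≤ u₀ y ∧ deriv u₀ y ≤ -|deriv u y| := by
      intro y hy
      rcases eq_or_lt_of_le hy.1 with h | h
      · rw [← h]; exact hWm
      · exact hWgt y h hy.2
    have hmargin := key m hmI hWall
    have hm1 : (0:ℝ) < u₀ m - |u m| := by
      linarith [(hmargin m ⟨le_rfl, hmc⟩).1]
    have hm2 : (0:ℝ) < -(deriv u₀ m) - |deriv u m| := by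
      have := (hmargin m ⟨le_rfl, hmc⟩).2; linarith
    have c1 : ContinuousAt (fun y => u₀ y - |u y|) m :=
      (hu₀ m hmI).continuousAt.sub (hu m hmI).continuousAt.abs
    have c2 : ContinuousAt (fun y => -(deriv u₀ y) - |deriv u y|) m :=
      (hu₀' m hmI).continuousAt.neg.sub (hu' m hmI).continuousAt.abs
    have e1 : ∀ᶠ y in 𝓝 m, 0 < u₀ y - |u y| :=
      c1.tendsto.eventually (eventually_gt_nhds hm1)
    have e2 : ∀ᶠ y in 𝓝 m, 0 < -(deriv u₀ y) - |deriv u y| :=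
      c2.tendsto.eventually (eventually_gt_nhds hm2)
    obtain ⟨δ, hδ, hball⟩ := Metric.eventually_nhds_iff.mp (e1.and e2)
    set m' : ℝ := max (m - δ/2) (m/2) with hm'def
    have hm'pos : 0 < m' := lt_max_of_lt_right (by linarith)
    have hm'lt : m' < m := max_lt (by linarith) (by linarith)
    have hm'S : m' ∈ S := by
      refine ⟨⟨hm'pos, by linarith⟩, ?_⟩
      intro y hy
      rcases lt_or_ge y m with hym | hym
      · have hdist : dist y m < δ := by
          rw [Real.dist_eq, abs_of_nonpos (by linarith)]
          have h5 : m - δ/2 ≤ m' := by rw [hm'def]; exact le_max_left _ _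
          linarith [hy.1]
        have := hball hdist
        exact ⟨by linarith [this.1], by linarith [this.2]⟩
      · exact hWall y ⟨hym, hy.2⟩
    have := csInf_le hbdd hm'S
    linarith
  intro x hx
  have hlt : sInf S < x := lt_of_le_of_lt hm hx.1
  obtain ⟨s, hsS, hsx⟩ := exists_lt_of_csInf_lt hSne hlt
  have := key s ⟨hsS.1.1, hsS.1.2⟩ hsS.2 x ⟨hsx.le, hx.2.le⟩
  exact ⟨by linarith [this.1], by linarith [this.2]⟩
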